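/- arXiv:2308.00054 — 4 statements merged into one kernel-verified Lean document; each statement's English description precedes it below -/
import Mathlib

section
/- Let T be a finite tree and let v be a vertex of T adjacent to two distinct leaves u and w. Then \u03b3^\u221e_{all,2}(T) = \u03b3^\u221e_{all,2}(T - u). -/
open SimpleGraph

universe u v

namespace EternalDom

variable {V : Type u} {W : Type v}

/-- `x` is within distance `k` of `y` in `G` (in particular, a path between them exists). -/
def WithinDist (G : SimpleGraph V) (k : ℕ) (x y : V) : Prop :=
  G.Reachable x y ∧ G.dist x y ≤ k

/-- A multiset of guards is distance-`k` dominating: every vertex is within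
distance `k` of some guard. -/
def IsDistKDomMultiset (G : SimpleGraph V) (k : ℕ) (D : Multiset V) : Prop :=
  ∀ w : V, ∃ x ∈ D, WithinDist G k x w

/-- `F` is an eternal distance-`k` defence family of guard configurations of size `m`:
a nonempty family of distance-`k` dominating multisets, all of cardinality `m`, such that
for every configuration `D ∈ F` and every attacked vertex `w` there is a configuration
`D' ∈ F` containing `w` that is obtained from `D` by a matching (bijection) moving each
guard a distance of at most `k`. -/
def IsEternalFamily (G : SimpleGraph V) (k m : ℕ) (F : Set (Multiset V)) : Prop :=
  F.Nonempty ∧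
    (∀ D ∈ F, Multiset.card D = m ∧ IsDistKDomMultiset G k D) ∧
    (∀ D ∈ F, ∀ w : V, ∃ D' ∈ F, w ∈ D' ∧ Multiset.Rel (WithinDist G k) D D')

/-- The eternal distance-`k` domination number `γ^∞_{all,k}(G)`. -/
noncomputable def eternalNum (G : SimpleGraph V) (k : ℕ) : ℕ :=
  sInf {m | ∃ F : Set (Multiset V), IsEternalFamily G k m F}

/-- `x` dominates `w`: they are equal or adjacent. -/
def Dominates (G : SimpleGraph V) (x w : V) : Prop := w = x ∨ G.Adj x w

/-- A dominating set of vertices. -/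
def IsDomSet (G : SimpleGraph V) (D : Set V) : Prop := ∀ w : V, ∃ x ∈ D, Dominates G x w

/-- The domination number `γ(G)`. -/
noncomputable def domNum (G : SimpleGraph V) : ℕ :=
  sInf {n | ∃ D : Set V, IsDomSet G D ∧ D.ncard = n}

/-- A distance-`k` dominating set of vertices. -/
def IsDistKDomSet (G : SimpleGraph V) (k : ℕ) (D : Set V) : Prop :=
  ∀ w : V, ∃ x ∈ D, WithinDist G k x w

/-- The distance-`k` domination number `γ_k(G)`. -/
noncomputable def distDomNum (G : SimpleGraph V) (k : ℕ) : ℕ :=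
  sInf {n | ∃ D : Set V, IsDistKDomSet G k D ∧ D.ncard = n}

/-- A leaf: a vertex of degree 1, i.e. with a unique neighbour. -/
def IsLeafV (G : SimpleGraph V) (x : V) : Prop := ∃! y, G.Adj x y

/-- A stem: a vertex adjacent to at least one leaf. -/
def IsStem (G : SimpleGraph V) (x : V) : Prop := ∃ y, G.Adj x y ∧ IsLeafV G y

/-- `k`-leaves: a `0`-leaf is a leaf; for `k > 0`, `v` is a `k`-leaf iff `v` is adjacent to
some `(k-1)`-leaf and all but at most one of the neighbours of `v` are `t`-leaves for some
`t < k`. -/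
def IsKLeaf (G : SimpleGraph V) : ℕ → V → Prop
  | 0, v => IsLeafV G v
  | (k + 1), v =>
      (∃ u, G.Adj v u ∧ IsKLeaf G k u) ∧
        ∃ w : V, ∀ x : V, G.Adj v x → x ≠ w → ∃ t, ∃ _ : t ≤ k, IsKLeaf G t x
  termination_by k _ => k
  decreasing_by all_goals omega

/-- For a 2-leaf `v`, the set `L(v)`: the union of `L[u]` over all neighbours `u` of `v`
which are 0-leaves or 1-leaves, where for a 1-leaf `u`, `L[u]` consists of `u` and the leaves
adjacent to `u`. -/
def Lopen (G : SimpleGraph V) (v : V) : Set V :=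
  {x | ∃ u, G.Adj v u ∧
    ((IsKLeaf G 0 u ∧ x = u) ∨
      (IsKLeaf G 1 u ∧ (x = u ∨ (G.Adj u x ∧ IsKLeaf G 0 x))))}

/-- For a 2-leaf `v`, the set `L[v] = L(v) ∪ {v}`. -/
def Lclosed (G : SimpleGraph V) (v : V) : Set V := insert v (Lopen G v)

/-- A graph is eternal distance-2 domination critical if deleting any non-cut vertex
(one whose removal leaves the graph connected) strictly decreases the eternal
distance-2 domination number. -/
def EternalCritical (G : SimpleGraph V) : Prop :=
  ∀ x : V, (G.induce {y | y ≠ x}).Connected →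
    eternalNum (G.induce {y | y ≠ x}) 2 < eternalNum G 2

/-- Attach a pendant path `x₁ x₂ … xₙ` on `n` new vertices to the vertex `y`,
via the edge `y x₁`. -/
def attachPath (G : SimpleGraph V) (y : V) (n : ℕ) : SimpleGraph (V ⊕ Fin n) :=
  G.map Sum.inl ⊔ (pathGraph n).map Sum.inr ⊔
    fromEdgeSet {e | ∃ h : 0 < n, e = s(Sum.inl y, Sum.inr ⟨0, h⟩)}

/-- The star `K_{1,m}`: centre `0`, leaves the `m` nonzero elements of `Fin (m+1)`. -/
def starGraph (m : ℕ) : SimpleGraph (Fin (m + 1)) where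
  Adj x y := (x = 0 ∧ y ≠ 0) ∨ (y = 0 ∧ x ≠ 0)
  symm := ⟨by tauto⟩
  loopless := ⟨by rintro x (⟨h1, h2⟩ | ⟨h1, h2⟩) <;> exact h2 h1⟩

/-- Disjoint union of `G` and the star `K_{1,m}` together with one edge joining the
vertex `a` of the star to the vertex `y` of `G`. -/
def attachStar (G : SimpleGraph V) (y : V) (m : ℕ) (a : Fin (m + 1)) :
    SimpleGraph (V ⊕ Fin (m + 1)) :=
  G.map Sum.inl ⊔ (starGraph m).map Sum.inr ⊔
    fromEdgeSet {s(Sum.inl y, Sum.inr a)}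

/-- From `G` and a vertex `v`: add a new star `K_{1,m}` joined by an edge from its centre
to `v`, together with `t` new leaves adjacent to `v`. -/
def addStarAndLeaves (G : SimpleGraph V) (v : V) (m t : ℕ) :
    SimpleGraph (V ⊕ (Fin (m + 1) ⊕ Fin t)) :=
  G.map Sum.inl ⊔
    (starGraph m).map (Sum.inr ∘ Sum.inl) ⊔
    fromEdgeSet ({s(Sum.inl v, Sum.inr (Sum.inl 0))} ∪
      {e | ∃ i : Fin t, e = s(Sum.inl v, Sum.inr (Sum.inr i))})

/-- From `G` and a vertex `v`: add two new stars `K_{1,m}` and `K_{1,M}`, joining the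
centre of each new star to `v` by an edge. -/
def addTwoStars (G : SimpleGraph V) (v : V) (m M : ℕ) :
    SimpleGraph (V ⊕ (Fin (m + 1) ⊕ Fin (M + 1))) :=
  G.map Sum.inl ⊔
    (starGraph m).map (Sum.inr ∘ Sum.inl) ⊔
    (starGraph M).map (Sum.inr ∘ Sum.inr) ⊔
    fromEdgeSet {s(Sum.inl v, Sum.inr (Sum.inl 0)), s(Sum.inl v, Sum.inr (Sum.inr 0))}

/-- The 1-sum of `G` and `H` at the vertex `u` of `G` and the vertex `w` of `H`:
the disjoint union of `G` and `H` with `u` and `w` identified. -/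
def oneSum (G : SimpleGraph V) (H : SimpleGraph W) (u : V) (w : W) :
    SimpleGraph (V ⊕ {x : W // x ≠ w}) where
  Adj x y :=
    match x, y with
    | Sum.inl a, Sum.inl b => G.Adj a b
    | Sum.inr a, Sum.inr b => H.Adj a.1 b.1
    | Sum.inl a, Sum.inr b => a = u ∧ H.Adj w b.1
    | Sum.inr a, Sum.inl b => b = u ∧ H.Adj w a.1
  symm := ⟨by
    rintro (a | a) (b | b) h
    · exact h.symm
    · exact h
    · exact h
    · exact h.symm⟩
  loopless := ⟨by
    rintro (a | a) h
    · exact G.loopless.irrefl a h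
    · exact H.loopless.irrefl a.1 h⟩



private lemma dist_le_of_hom {W' : Type v} {G : SimpleGraph V} {H : SimpleGraph W'} (φ : G →g H)
    {x y : V} (h : G.Reachable x y) : H.dist (φ x) (φ y) ≤ G.dist x y := by
  obtain ⟨p, hp⟩ := h.exists_walk_length_eq_dist
  calc H.dist (φ x) (φ y) ≤ (p.map φ).length := SimpleGraph.dist_le _
    _ = p.length := p.length_map _
    _ = _ := hp

private lemma twin_dist {G : SimpleGraph V} (hc : G.Connected) {v u w : V}
    (hu : G.Adj v u) (hw : G.Adj v w) (hwl : IsLeafV G w) {x : V}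
    (hx : G.dist x w ≤ 2) : G.dist x u ≤ 2 := by
  obtain ⟨z, hz, hz'⟩ := hwl
  have hvz : v = z := hz' v hw.symm
  obtain ⟨p, hp⟩ := (hc.preconnected x w).exists_walk_length_eq_dist
  rw [← hp] at hx
  cases p with
  | nil =>
    calc G.dist w u ≤ (hw.symm.toWalk.append hu.toWalk).length := SimpleGraph.dist_le _
      _ ≤ 2 := by simp
  | cons h q =>
    rename_i y
    cases q with
    | nil =>
      have hxv : x = v := (hz' x h.symm).trans hvz.symm
      rw [hxv]
      calc G.dist v u ≤ (hu.toWalk).length := SimpleGraph.dist_le _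
        _ ≤ 2 := by simp
    | cons h2 q2 =>
      rename_i z2
      cases q2 with
      | nil =>
        have hyv : y = v := (hz' y h2.symm).trans hvz.symm
        rw [hyv] at h
        calc G.dist x u ≤ (h.toWalk.append hu.toWalk).length := SimpleGraph.dist_le _
          _ ≤ 2 := by simp
      | cons h3 q3 =>
        simp [SimpleGraph.Walk.length_cons] at hx

private noncomputable def projFun (u w : V) (hne : w ≠ u) (x : V) : ↥{y : V | y ≠ u} :=
  haveI := Classical.decEq V
  if h : x = u then ⟨w, hne⟩ else ⟨x, h⟩

private lemma projFun_u (u w : V) (hne : w ≠ u) : projFun u w hne u = ⟨w, hne⟩ := by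
  simp [projFun]

private lemma projFun_ne (u w : V) (hne : w ≠ u) (x : V) (h : x ≠ u) :
    projFun u w hne x = ⟨x, h⟩ := by
  simp [projFun, h]

private lemma projFun_val (u w : V) (hne : w ≠ u) (b : ↥{y : V | y ≠ u}) :
    projFun u w hne b.1 = b := by
  rw [projFun_ne u w hne b.1 b.2]

private noncomputable def projHom (G : SimpleGraph V) (v u w : V) (hne : w ≠ u)
    (hu : G.Adj v u) (hul : IsLeafV G u) (hw : G.Adj v w) :
    G →g G.induce {y : V | y ≠ u} where
  toFun := projFun u w hne
  map_rel' := by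
    intro a b hab
    obtain ⟨z, hz, hz'⟩ := hul
    have hvz : v = z := hz' v hu.symm
    have hvu : v ≠ u := hu.ne
    by_cases ha : a = u
    · have hbv : b = v := (hz' b (ha ▸ hab)).trans hvz.symm
      rw [ha, hbv, projFun_u u w hne, projFun_ne u w hne v hvu]
      exact hw.symm
    · by_cases hb : b = u
      · have hav : a = v := (hz' a (hb ▸ hab.symm)).trans hvz.symm
        rw [hb, hav, projFun_u u w hne, projFun_ne u w hne v hvu]
        exact hw
      · rw [projFun_ne u w hne a ha, projFun_ne u w hne b hb]
        exact hab

private def valHom (G : SimpleGraph V) (s : Set V) : G.induce s →g G where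
  toFun := Subtype.val
  map_rel' := fun h => h

private lemma key (G : SimpleGraph V) (hG : G.IsTree)
    (v u w : V) (huw : u ≠ w) (hu : G.Adj v u) (hul : IsLeafV G u)
    (hw : G.Adj v w) (hwl : IsLeafV G w) (m : ℕ) :
    (∃ F, IsEternalFamily G 2 m F) ↔
      (∃ F, IsEternalFamily (G.induce {x : V | x ≠ u}) 2 m F) := by
  classical
  have hc : G.Connected := hG.isConnected
  have hwne : w ≠ u := huw.symm
  set G' := G.induce {x : V | x ≠ u} with hG'def
  set ρ : V → ↥{x : V | x ≠ u} := projFun u w hwne with hρdef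
  have hρu : ρ u = ⟨w, hwne⟩ := projFun_u u w hwne
  have hρne : ∀ x (h : x ≠ u), ρ x = ⟨x, h⟩ := projFun_ne u w hwne
  have hρval : ∀ b, ρ b.1 = b := projFun_val u w hwne
  have hmapval : ∀ D' : Multiset ↥{x : V | x ≠ u}, (D'.map Subtype.val).map ρ = D' := by
    intro D'
    rw [Multiset.map_map]
    calc D'.map (ρ ∘ Subtype.val) = D'.map id := Multiset.map_congr rfl (fun b _ => hρval b)
      _ = D' := Multiset.map_id D'
  let φ : G →g G' := projHom G v u w hwne hu hul hw
  have hφ : ∀ x, φ x = ρ x := fun _ => rfl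
  have hG'reach : ∀ a b : V, G'.Reachable (ρ a) (ρ b) := fun a b =>
    (hc.preconnected a b).map φ
  have hG'dist : ∀ a b : V, G'.dist (ρ a) (ρ b) ≤ G.dist a b := fun a b =>
    dist_le_of_hom φ (hc.preconnected a b)
  have hGdist : ∀ a b : ↥{x : V | x ≠ u}, G'.Reachable a b → G.dist a.1 b.1 ≤ G'.dist a b :=
    fun a b hr => dist_le_of_hom (valHom G _) hr
  have twin : ∀ x : V, G.dist x w ≤ 2 → G.dist x u ≤ 2 := fun x hx =>
    twin_dist hc hu hw hwl hx
  have W_to_W' : ∀ a b : V, WithinDist G 2 a b → WithinDist G' 2 (ρ a) (ρ b) :=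
    fun a b h => ⟨hG'reach a b, le_trans (hG'dist a b) h.2⟩
  have W'_to_W : ∀ (a : V) (b : ↥{x : V | x ≠ u}),
      WithinDist G' 2 (ρ a) b → WithinDist G 2 a b.1 := by
    intro a b h
    refine ⟨hc.preconnected a b.1, ?_⟩
    have h1 : G.dist (ρ a).1 b.1 ≤ 2 := le_trans (hGdist _ _ h.1) h.2
    by_cases ha : a = u
    · subst ha
      rw [hρu] at h1
      rw [dist_comm]
      exact twin b.1 (by rwa [dist_comm] at h1)
    · rwa [hρne a ha] at h1
  constructor
  · rintro ⟨F, hFne, hFprops, hFdef⟩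
    refine ⟨(fun D => D.map ρ) '' F, ⟨(hFne.choose).map ρ, ⟨_, hFne.choose_spec, rfl⟩⟩, ?_, ?_⟩
    · rintro D' ⟨D, hD, rfl⟩
      refine ⟨by rw [Multiset.card_map]; exact (hFprops D hD).1, ?_⟩
      intro b
      obtain ⟨g, hg, hW⟩ := (hFprops D hD).2 b.1
      refine ⟨ρ g, Multiset.mem_map_of_mem ρ hg, ?_⟩
      have := W_to_W' g b.1 hW
      rwa [hρval b] at this
    · rintro D' ⟨D, hD, rfl⟩ b
      obtain ⟨E, hE, hbE, hrel⟩ := hFdef D hD b.1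
      refine ⟨E.map ρ, ⟨E, hE, rfl⟩, ?_, ?_⟩
      · have := Multiset.mem_map_of_mem ρ hbE
        rwa [hρval b] at this
      · exact Multiset.rel_map.2 (hrel.mono fun a _ b _ h => W_to_W' a b h)
  · rintro ⟨F', hF'ne, hF'props, hF'def⟩
    refine ⟨{D : Multiset V | D.map ρ ∈ F'}, ?_, ?_, ?_⟩
    · obtain ⟨D', hD'⟩ := hF'ne
      exact ⟨D'.map Subtype.val, by rw [Set.mem_setOf_eq, hmapval]; exact hD'⟩
    · intro D hD
      rw [Set.mem_setOf_eq] at hD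
      constructor
      · rw [← Multiset.card_map ρ D]; exact (hF'props _ hD).1
      · intro x
        by_cases hx : x = u
        · rw [hx]
          obtain ⟨b, hb, hWb⟩ := (hF'props _ hD).2 ⟨w, hwne⟩
          obtain ⟨g, hg, rfl⟩ := Multiset.mem_map.1 hb
          have hgw := W'_to_W g ⟨w, hwne⟩ hWb
          exact ⟨g, hg, hc.preconnected g u, twin g hgw.2⟩
        · obtain ⟨b, hb, hWb⟩ := (hF'props _ hD).2 ⟨x, hx⟩
          obtain ⟨g, hg, rfl⟩ := Multiset.mem_map.1 hb
          exact ⟨g, hg, W'_to_W g ⟨x, hx⟩ hWb⟩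
    · intro D hD x
      rw [Set.mem_setOf_eq] at hD
      by_cases hx : x = u
      · rw [hx]
        obtain ⟨D'', hD'', hwD'', hrel⟩ := hF'def (D.map ρ) hD ⟨w, hwne⟩
        obtain ⟨T, rfl⟩ := Multiset.exists_cons_of_mem hwD''
        refine ⟨u ::ₘ T.map Subtype.val, ?_, Multiset.mem_cons_self u _, ?_⟩
        · rw [Set.mem_setOf_eq, Multiset.map_cons, hρu, hmapval]
          exact hD''
        · have hrel' := Multiset.rel_map_left.1 hrel
          obtain ⟨a, D₀, haw, hrest, rfl⟩ := Multiset.rel_cons_right.1 hrel'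
          refine Multiset.Rel.cons ?_ ?_
          · have hgw := W'_to_W a ⟨w, hwne⟩ haw
            exact ⟨hc.preconnected a u, twin a hgw.2⟩
          · exact Multiset.rel_map_right.2 (hrest.mono fun a _ b _ h => W'_to_W a b h)
      · obtain ⟨D'', hD'', hxD'', hrel⟩ := hF'def (D.map ρ) hD ⟨x, hx⟩
        refine ⟨D''.map Subtype.val, ?_, ?_, ?_⟩
        · rw [Set.mem_setOf_eq, hmapval]; exact hD''
        · exact Multiset.mem_map_of_mem Subtype.val hxD''
        · have hrel' := Multiset.rel_map_left.1 hrel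
          exact Multiset.rel_map_right.2 (hrel'.mono fun a _ b _ h => W'_to_W a b h)

/-- deleting one of two leaves sharing a common neighbour does not change the
eternal distance-2 domination number of a tree. -/
theorem delete_twin_leaf {V : Type u} [Fintype V] (G : SimpleGraph V) (hG : G.IsTree)
    (v u w : V) (huw : u ≠ w) (hu : G.Adj v u) (hul : IsLeafV G u)
    (hw : G.Adj v w) (hwl : IsLeafV G w) :
    eternalNum G 2 = eternalNum (G.induce {x | x ≠ u}) 2 := by
  unfold eternalNum
  congr 1
  ext m
  exact key G hG v u w huw hu hul hw hwl m

end EternalDom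
end

section
/- Let T be a finite tree with a leaf x, and let T' be the tree obtained from T by adding a new path a-b-c on three vertices together with the edge joining a to x. Then T' is eternal distance-2 domination critical if and only if T is eternal distance-2 domination critical. -/
open SimpleGraph

universe u v

namespace EternalDom

variable {V : Type u} {W : Type v}

lemma withinDist_refl (G : SimpleGraph V) (k : ℕ) (x : V) : WithinDist G k x x :=
  ⟨Reachable.refl x, by simp [SimpleGraph.dist_self]⟩

lemma withinDist_of_walk {G : SimpleGraph V} {k : ℕ} {x y : V} (p : G.Walk x y)
    (h : p.length ≤ k) : WithinDist G k x y :=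
  ⟨p.reachable, le_trans (SimpleGraph.dist_le p) h⟩

lemma withinDist_two {G : SimpleGraph V} {x y : V} (h : WithinDist G 2 x y) :
    x = y ∨ G.Adj x y ∨ ∃ z, G.Adj x z ∧ G.Adj z y := by
  obtain ⟨hr, hd⟩ := h
  obtain ⟨p, hp⟩ := hr.exists_walk_length_eq_dist
  have hl : p.length ≤ 2 := by rw [hp]; exact hd
  match p, hl with
  | SimpleGraph.Walk.nil, _ => exact Or.inl rfl
  | SimpleGraph.Walk.cons h SimpleGraph.Walk.nil, _ => exact Or.inr (Or.inl h)
  | SimpleGraph.Walk.cons h (SimpleGraph.Walk.cons h' SimpleGraph.Walk.nil), _ =>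
      exact Or.inr (Or.inr ⟨_, h, h'⟩)
  | SimpleGraph.Walk.cons h (SimpleGraph.Walk.cons h' (SimpleGraph.Walk.cons h'' q)), hl => 
      exact absurd hl (by simp only [SimpleGraph.Walk.length_cons]; omega)

lemma walk_lip {G : SimpleGraph V} {G' : SimpleGraph W} (f : V → W)
    (hf : ∀ ⦃a b⦄, G.Adj a b → G'.Adj (f a) (f b) ∨ f a = f b) :
    ∀ {x y : V}, (p : G.Walk x y) → ∃ q : G'.Walk (f x) (f y), q.length ≤ p.length := by
  intro x y p
  induction p with
  | nil => exact ⟨SimpleGraph.Walk.nil, le_refl _⟩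
  | cons h p ih =>
      obtain ⟨q, hq⟩ := ih
      rcases hf h with h' | h'
      · exact ⟨SimpleGraph.Walk.cons h' q, by simp [SimpleGraph.Walk.length_cons]; omega⟩
      · exact ⟨q.copy h'.symm rfl, by
          rw [SimpleGraph.Walk.length_copy]
          simp only [SimpleGraph.Walk.length_cons]; omega⟩

lemma withinDist_map {G : SimpleGraph V} {G' : SimpleGraph W} (f : V → W)
    (hf : ∀ ⦃a b⦄, G.Adj a b → G'.Adj (f a) (f b) ∨ f a = f b) {k : ℕ} {x y : V}
    (h : WithinDist G k x y) : WithinDist G' k (f x) (f y) := by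
  obtain ⟨hr, hd⟩ := h
  obtain ⟨p, hp⟩ := hr.exists_walk_length_eq_dist
  obtain ⟨q, hq⟩ := walk_lip f hf p
  exact withinDist_of_walk q (by omega)

lemma reachable_lip {G : SimpleGraph V} {G' : SimpleGraph W} (f : V → W)
    (hf : ∀ ⦃a b⦄, G.Adj a b → G'.Adj (f a) (f b) ∨ f a = f b) {x y : V}
    (h : G.Reachable x y) : G'.Reachable (f x) (f y) := by
  obtain ⟨p⟩ := h
  obtain ⟨q, _⟩ := walk_lip f hf p
  exact q.reachable

lemma no_reach {G : SimpleGraph V} (f : V → Bool)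
    (hf : ∀ ⦃a b⦄, G.Adj a b → f a = f b) {x y : V} (hne : f x ≠ f y) : ¬ G.Reachable x y := by
  intro h
  obtain ⟨p⟩ := h
  apply hne
  clear hne
  induction p with
  | nil => rfl
  | cons h p ih => exact (hf h).trans ih

lemma withinDist_symm {G : SimpleGraph V} {k : ℕ} {x y : V} (h : WithinDist G k x y) :
    WithinDist G k y x := ⟨h.1.symm, by rw [SimpleGraph.dist_comm]; exact h.2⟩

-- pairs representation of Multiset.Rel

lemma rel_of_pairs {α : Type*} {β : Type*} {γ : Type*} {R : β → γ → Prop}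
    (P : Multiset α) (f : α → β) (g : α → γ) (h : ∀ p ∈ P, R (f p) (g p)) :
    Multiset.Rel R (P.map f) (P.map g) := by
  induction P using Multiset.induction with
  | empty => simp only [Multiset.map_zero]; exact Multiset.Rel.zero
  | cons a s ih =>
      simp only [Multiset.map_cons]
      exact Multiset.Rel.cons (h a (Multiset.mem_cons_self a s))
        (ih fun p hp => h p (Multiset.mem_cons_of_mem hp))

lemma pairs_of_rel {α β : Type*} {R : α → β → Prop} {s : Multiset α} {t : Multiset β}
    (h : Multiset.Rel R s t) :
    ∃ P : Multiset (α × β), P.map Prod.fst = s ∧ P.map Prod.snd = t ∧ ∀ p ∈ P, R p.1 p.2 := by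
  induction h with
  | zero => exact ⟨0, by simp⟩
  | @cons a b as bs hab _ ih =>
      obtain ⟨P, h1, h2, h3⟩ := ih
      refine ⟨(a, b) ::ₘ P, by simp [h1], by simp [h2], ?_⟩
      intro p hp
      rcases Multiset.mem_cons.mp hp with h | h
      · subst h; exact hab
      · exact h3 p h

lemma pair_le {α : Type*} [DecidableEq α] {P : Multiset α} {x y : α}
    (hx : x ∈ P) (hy : y ∈ P) (hne : x ≠ y) : ({x, y} : Multiset α) ≤ P := by
  have h1 : y ∈ P.erase x := (Multiset.mem_erase_of_ne hne.symm).mpr hy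
  have h2 : ({x, y} : Multiset α) = x ::ₘ {y} := rfl
  rw [h2, ← Multiset.cons_erase hx]
  exact Multiset.cons_le_cons x (Multiset.singleton_le.mpr h1)

lemma exists_eternalFamily (G : SimpleGraph V) [Fintype V] [Nonempty V] (k : ℕ) :
    ∃ m F, IsEternalFamily G k m F := by
  classical
  refine ⟨Fintype.card V, {(Finset.univ : Finset V).val}, ⟨_, rfl⟩, ?_, ?_⟩
  · rintro D rfl
    constructor
    · simp
    · intro w
      exact ⟨w, by simp, withinDist_refl G k w⟩
  · rintro D rfl w
    refine ⟨_, rfl, by simp, ?_⟩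
    exact Multiset.rel_refl_of_refl_on (fun x _ => withinDist_refl G k x)

lemma wd_adjL {G : SimpleGraph V} {u v : V} (h : G.Adj u v) : WithinDist G 2 u v :=
  withinDist_of_walk (SimpleGraph.Walk.cons h SimpleGraph.Walk.nil) (by simp)

lemma wd_twoL {G : SimpleGraph V} {u m v : V} (h1 : G.Adj u m) (h2 : G.Adj m v) :
    WithinDist G 2 u v :=
  withinDist_of_walk (SimpleGraph.Walk.cons h1 (SimpleGraph.Walk.cons h2 SimpleGraph.Walk.nil))
    (by simp)

lemma wd_ball {G : SimpleGraph V} {y u v : V} (h1 : u = y ∨ G.Adj y u)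
    (h2 : v = y ∨ G.Adj y v) : WithinDist G 2 u v := by
  rcases h1 with rfl | h1 <;> rcases h2 with rfl | h2
  · exact withinDist_refl G 2 _
  · exact wd_adjL h2
  · exact wd_adjL h1.symm
  · exact wd_twoL h1.symm h2

lemma pend {S : Type u} {V' : Type v} [Fintype S] [Fintype V']
    (K : SimpleGraph S) (B : SimpleGraph V') (a b c y : S) (ι : V' → S)
    (hinj : Function.Injective ι)
    (hadj : ∀ u v : V', B.Adj u v ↔ K.Adj (ι u) (ι v))
    (hrange : ∀ z : S, (z ≠ a ∧ z ≠ b ∧ z ≠ c) ↔ ∃ u, ι u = z)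
    (hyr : ∃ u : V', ι u = y)
    (hya : K.Adj y a) (hab : K.Adj a b) (hbc : K.Adj b c)
    (hA : ∀ z, K.Adj z a → z = y ∨ z = b)
    (hB : ∀ z, K.Adj z b → z = a ∨ z = c)
    (hC : ∀ z, K.Adj z c → z = b) :
    eternalNum K 2 = eternalNum B 2 + 1 := by
  classical
  obtain ⟨y', hy'⟩ := hyr
  have hnra : ¬ ∃ u, ι u = a := fun h => ((hrange a).mpr h).1 rfl
  have hnrb : ¬ ∃ u, ι u = b := fun h => ((hrange b).mpr h).2.1 rfl
  have hnrc : ¬ ∃ u, ι u = c := fun h => ((hrange c).mpr h).2.2 rfl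
  set Tl : S → Prop := fun z => z = a ∨ z = b ∨ z = c with hTldef
  have hTl_nr : ∀ z, Tl z → ¬ ∃ u, ι u = z := by
    rintro z (rfl | rfl | rfl) <;> assumption
  have hr_nTl : ∀ z, (∃ u, ι u = z) → ¬ Tl z := fun z h ht => hTl_nr z ht h
  have hnTl_r : ∀ z, ¬ Tl z → ∃ u, ι u = z := by
    intro z hz
    refine (hrange z).mp ?_
    simp only [hTldef] at hz
    push_neg at hz
    exact hz
  set ψ : S → V' := fun z => if h : ∃ u, ι u = z then h.choose else y' with hψdef
  have hψι : ∀ u : V', ψ (ι u) = u := by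
    intro u
    have h : ∃ w, ι w = ι u := ⟨u, rfl⟩
    simp only [hψdef, dif_pos h]
    exact hinj h.choose_spec
  have hψnr : ∀ z, ¬(∃ u, ι u = z) → ψ z = y' := by
    intro z h; simp only [hψdef, dif_neg h]
  have hψT : ∀ z, Tl z → ψ z = y' := fun z h => hψnr z (hTl_nr z h)
  have hψy : ψ y = y' := by rw [← hy', hψι]
  have ψlip : ∀ ⦃z w : S⦄, K.Adj z w → B.Adj (ψ z) (ψ w) ∨ ψ z = ψ w := by
    intro z w hzw
    by_cases hz : ∃ u, ι u = z
    · by_cases hw : ∃ u, ι u = w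
      · obtain ⟨uz, rfl⟩ := hz; obtain ⟨uw, rfl⟩ := hw
        rw [hψι, hψι]
        exact Or.inl ((hadj uz uw).mpr hzw)
      · have hTw : Tl w := by
          by_contra hc; exact hw (hnTl_r w hc)
        right
        rcases hTw with rfl | rfl | rfl
        · rcases hA z hzw with rfl | rfl
          · rw [hψy, hψT _ (Or.inl rfl)]
          · exact absurd hz hnrb
        · rcases hB z hzw with rfl | rfl
          · exact absurd hz hnra
          · exact absurd hz hnrc
        · rcases hC z hzw with rfl
          exact absurd hz hnrb
    · have hTz : Tl z := by
        by_contra hc; exact hz (hnTl_r z hc)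
      right
      by_cases hw : ∃ u, ι u = w
      · rcases hTz with rfl | rfl | rfl
        · rcases hA w hzw.symm with rfl | rfl
          · rw [hψy, hψT _ (Or.inl rfl)]
          · exact absurd hw hnrb
        · rcases hB w hzw.symm with rfl | rfl
          · exact absurd hw hnra
          · exact absurd hw hnrc
        · rcases hC w hzw.symm with rfl
          exact absurd hw hnrb
      · rw [hψnr _ hz, hψnr _ hw]
  have ιlip : ∀ ⦃p q : V'⦄, B.Adj p q → K.Adj (ι p) (ι q) ∨ ι p = ι q :=
    fun p q h => Or.inl ((hadj p q).mp h)
  -- ball facts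
  have F1 : ∀ z, WithinDist K 2 z c → Tl z := by
    intro z h
    rcases withinDist_two h with rfl | h | ⟨m, h1, h2⟩
    · exact Or.inr (Or.inr rfl)
    · exact Or.inr (Or.inl (hC z h))
    · rcases hC m h2 with rfl
      rcases hB z h1 with rfl | rfl
      · exact Or.inl rfl
      · exact Or.inr (Or.inr rfl)
  have F2 : ∀ z v, WithinDist K 2 z v → (z = a ∨ z = b) → ¬ Tl v → (v = y ∨ K.Adj y v) := by
    intro z v h hz hv
    rcases hz with rfl | rfl
    · rcases withinDist_two h with rfl | h | ⟨m, h1, h2⟩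
      · exact absurd (Or.inl rfl) hv
      · rcases hA v h.symm with rfl | rfl
        · exact Or.inl rfl
        · exact absurd (Or.inr (Or.inl rfl)) hv
      · rcases hA m h1.symm with rfl | rfl
        · exact Or.inr h2
        · rcases hB v h2.symm with rfl | rfl
          · exact absurd (Or.inl rfl) hv
          · exact absurd (Or.inr (Or.inr rfl)) hv
    · rcases withinDist_two h with rfl | h | ⟨m, h1, h2⟩
      · exact absurd (Or.inr (Or.inl rfl)) hv
      · rcases hB v h.symm with rfl | rfl
        · exact absurd (Or.inl rfl) hv
        · exact absurd (Or.inr (Or.inr rfl)) hv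
      · rcases hB m h1.symm with rfl | rfl
        · rcases hA v h2.symm with rfl | rfl
          · exact Or.inl rfl
          · exact absurd (Or.inr (Or.inl rfl)) hv
        · rcases hC v h2.symm with rfl
          exact absurd (Or.inr (Or.inl rfl)) hv
  have F3 : ∀ z w, WithinDist K 2 z w → Tl w → Tl z ∨ z = y ∨ K.Adj y z := by
    intro z w h hw
    rcases hw with rfl | rfl | rfl
    · rcases withinDist_two h with rfl | h | ⟨m, h1, h2⟩
      · exact Or.inl (Or.inl rfl)
      · rcases hA z h with rfl | rfl
        · exact Or.inr (Or.inl rfl)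
        · exact Or.inl (Or.inr (Or.inl rfl))
      · rcases hA m h2 with rfl | rfl
        · exact Or.inr (Or.inr h1.symm)
        · rcases hB z h1 with rfl | rfl
          · exact Or.inl (Or.inl rfl)
          · exact Or.inl (Or.inr (Or.inr rfl))
    · rcases withinDist_two h with rfl | h | ⟨m, h1, h2⟩
      · exact Or.inl (Or.inr (Or.inl rfl))
      · rcases hB z h with rfl | rfl
        · exact Or.inl (Or.inl rfl)
        · exact Or.inl (Or.inr (Or.inr rfl))
      · rcases hB m h2 with rfl | rfl
        · rcases hA z h1 with rfl | rfl
          · exact Or.inr (Or.inl rfl)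
          · exact Or.inl (Or.inr (Or.inl rfl))
        · rcases hC z h1 with rfl
          exact Or.inl (Or.inr (Or.inl rfl))
    · exact Or.inl (F1 z h)
  have F7 : ∀ g τ, Tl g → Tl τ → WithinDist K 2 g τ := by
    intro g τ hg hτ
    rcases hg with rfl | rfl | rfl <;> rcases hτ with rfl | rfl | rfl
    · exact withinDist_refl K 2 _
    · exact wd_adjL hab
    · exact wd_twoL hab hbc
    · exact wd_adjL hab.symm
    · exact withinDist_refl K 2 _
    · exact wd_adjL hbc
    · exact wd_twoL hbc.symm hab.symm
    · exact wd_adjL hbc.symm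
    · exact withinDist_refl K 2 _
  -- UPPER
  have upper : ∀ n F, IsEternalFamily B 2 n F →
      IsEternalFamily K 2 (n+1) {E | ∃ D ∈ F, ∃ g, Tl g ∧ E = D.map ι + {g}} := by
    rintro n F ⟨⟨D₀, hD₀⟩, hprop, htrans⟩
    refine ⟨⟨D₀.map ι + {a}, ⟨D₀, hD₀, a, Or.inl rfl, rfl⟩⟩, ?_, ?_⟩
    · rintro E ⟨D, hD, g, hg, rfl⟩
      constructor
      · simp [Multiset.card_map, (hprop D hD).1]
      · intro w
        by_cases hw : ∃ u, ι u = w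
        · obtain ⟨u, rfl⟩ := hw
          obtain ⟨p, hp, hpd⟩ := (hprop D hD).2 u
          refine ⟨ι p, ?_, withinDist_map ι ιlip hpd⟩
          rw [Multiset.mem_add]
          exact Or.inl (Multiset.mem_map_of_mem ι hp)
        · have hTw : Tl w := by by_contra hc; exact hw (hnTl_r w hc)
          refine ⟨g, ?_, F7 g w hg hTw⟩
          rw [Multiset.mem_add]
          exact Or.inr (Multiset.mem_singleton_self g)
    · rintro E ⟨D, hD, g, hg, rfl⟩ w
      by_cases hw : ∃ u, ι u = w
      · obtain ⟨u, rfl⟩ := hw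
        obtain ⟨D₁, hD₁, hu, hrel⟩ := htrans D hD u
        refine ⟨D₁.map ι + {g}, ⟨D₁, hD₁, g, hg, rfl⟩, ?_, ?_⟩
        · rw [Multiset.mem_add]
          exact Or.inl (Multiset.mem_map_of_mem ι hu)
        · refine Multiset.Rel.add ?_
            (Multiset.Rel.cons (withinDist_refl K 2 g) Multiset.Rel.zero)
          obtain ⟨P, hP1, hP2, hP3⟩ := pairs_of_rel hrel
          rw [← hP1, ← hP2, Multiset.map_map, Multiset.map_map]
          exact rel_of_pairs P _ _ (fun p hp => withinDist_map ι ιlip (hP3 p hp))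
      · have hTw : Tl w := by by_contra hc; exact hw (hnTl_r w hc)
        refine ⟨D.map ι + {w}, ⟨D, hD, w, hTw, rfl⟩, ?_, ?_⟩
        · rw [Multiset.mem_add]
          exact Or.inr (Multiset.mem_singleton_self w)
        · exact Multiset.Rel.add
            (Multiset.rel_refl_of_refl_on fun x _ => withinDist_refl K 2 x)
            (Multiset.Rel.cons (F7 g w hg hTw) Multiset.Rel.zero)
  -- LOWER
  have lower : ∀ m F, IsEternalFamily K 2 m F →
      1 ≤ m ∧ IsEternalFamily B 2 (m-1) {E | ∃ D ∈ F, E = (D.map ψ).erase y'} := by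
    rintro m F ⟨⟨D₀, hD₀⟩, hprop, htrans⟩
    have htail : ∀ D, D ∈ F → ∃ g ∈ D, Tl g := by
      intro D hD
      obtain ⟨g, hg, hwd⟩ := (hprop D hD).2 c
      exact ⟨g, hg, F1 g hwd⟩
    have hyin : ∀ D, D ∈ F → y' ∈ D.map ψ := by
      intro D hD
      obtain ⟨g, hg, hTg⟩ := htail D hD
      exact Multiset.mem_map.mpr ⟨g, hg, hψT g hTg⟩
    have hmem : ∀ D, D ∈ F → ∀ u : V', ι u ∈ D → u ∈ (D.map ψ).erase y' := by
      intro D hD u hu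
      by_cases h : u = y'
      · rw [h] at hu ⊢
        obtain ⟨g, hg, hTg⟩ := htail D hD
        have hne : ι y' ≠ g := fun hc => hTl_nr g hTg ⟨y', hc⟩
        have hle2 := Multiset.map_le_map (f := ψ) (pair_le hu hg hne)
        have e : ({ι y', g} : Multiset S).map ψ = ({y', y'} : Multiset V') := by
          have : ({ι y', g} : Multiset S) = ι y' ::ₘ {g} := rfl
          rw [this, Multiset.map_cons, Multiset.map_singleton, hψι, hψT g hTg]
          rfl
        rw [e] at hle2
        have hc2 : 2 ≤ (D.map ψ).count y' := by
          have h2 := Multiset.le_iff_count.mp hle2 y'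
          have : ({y', y'} : Multiset V').count y' = 2 := by
            have : ({y', y'} : Multiset V') = y' ::ₘ {y'} := rfl
            rw [this, Multiset.count_cons_self, Multiset.count_singleton]
            simp
          omega
        rw [← Multiset.count_pos, Multiset.count_erase_self]
        omega
      · rw [Multiset.mem_erase_of_ne h]
        exact Multiset.mem_map.mpr ⟨ι u, hu, hψι u⟩
    have hkey : ∀ D, D ∈ F → ∀ v : V',
        (¬ ∃ g ∈ D, (∃ u, ι u = g) ∧ WithinDist K 2 g (ι v)) →
        y' ∈ (D.map ψ).erase y' ∧ WithinDist B 2 y' v := by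
      intro D hD v hbad
      obtain ⟨g₀, hg₀, hwd₀⟩ := (hprop D hD).2 (ι v)
      have hTg₀ : Tl g₀ := by
        by_contra hc
        exact hbad ⟨g₀, hg₀, hnTl_r g₀ hc, hwd₀⟩
      have hg₀ab : g₀ = a ∨ g₀ = b := by
        rcases hTg₀ with h | h | h
        · exact Or.inl h
        · exact Or.inr h
        · exfalso
          subst h
          exact hTl_nr (ι v) (F1 (ι v) (withinDist_symm hwd₀)) ⟨v, rfl⟩
      have hvy : ι v = y ∨ K.Adj y (ι v) :=
        F2 g₀ (ι v) hwd₀ hg₀ab (hr_nTl (ι v) ⟨v, rfl⟩)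
      have hwdB : WithinDist B 2 y' v := by
        rcases hvy with h | h
        · have hvy' : v = y' := hinj (by rw [hy', h])
          rw [hvy']
          exact withinDist_refl B 2 y'
        · exact wd_adjL ((hadj y' v).mpr (by rwa [hy']))
      obtain ⟨D₁, hD₁, hvin, hrel⟩ := htrans D hD (ι v)
      obtain ⟨P, hP1, hP2, hP3⟩ := pairs_of_rel hrel
      rw [← hP2] at hvin
      obtain ⟨α, hαP, hα2⟩ := Multiset.mem_map.mp hvin
      have hα1 : WithinDist K 2 α.1 (ι v) := hα2 ▸ hP3 α hαP
      have hαD : α.1 ∈ D := by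
        rw [← hP1]; exact Multiset.mem_map_of_mem _ hαP
      have hTα : Tl α.1 := by
        by_contra hc
        exact hbad ⟨α.1, hαD, hnTl_r _ hc, hα1⟩
      obtain ⟨g₁, hg₁, hwd₁⟩ := (hprop D₁ hD₁).2 c
      have hTg₁ : Tl g₁ := F1 g₁ hwd₁
      rw [← hP2] at hg₁
      obtain ⟨β, hβP, hβ2⟩ := Multiset.mem_map.mp hg₁
      have hβ1 : WithinDist K 2 β.1 g₁ := hβ2 ▸ hP3 β hβP
      have hβD : β.1 ∈ D := by
        rw [← hP1]; exact Multiset.mem_map_of_mem _ hβP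
      have hTβ : Tl β.1 := by
        by_contra hTβ
        rcases F3 β.1 g₁ hβ1 hTg₁ with h | h
        · exact hTβ h
        · exact hbad ⟨β.1, hβD, hnTl_r β.1 hTβ, wd_ball h hvy⟩
      have hαβ : α ≠ β := by
        intro hc
        have : Tl (ι v) := by rw [← hα2, hc, hβ2]; exact hTg₁
        exact hTl_nr _ this ⟨v, rfl⟩
      have hle2 := Multiset.map_le_map (f := fun p => ψ p.1) (pair_le hαP hβP hαβ)
      have e : ({α, β} : Multiset (S × S)).map (fun p => ψ p.1) = ({y', y'} : Multiset V') := by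
        have : ({α, β} : Multiset (S × S)) = α ::ₘ {β} := rfl
        rw [this, Multiset.map_cons, Multiset.map_singleton, hψT _ hTα, hψT _ hTβ]
        rfl
      rw [e] at hle2
      have eD : D.map ψ = P.map (fun p => ψ p.1) := by
        rw [← hP1, Multiset.map_map]
        rfl
      have hc2 : 2 ≤ (D.map ψ).count y' := by
        have h2 := Multiset.le_iff_count.mp hle2 y'
        rw [← eD] at h2
        have : ({y', y'} : Multiset V').count y' = 2 := by
          have : ({y', y'} : Multiset V') = y' ::ₘ {y'} := rfl
          rw [this, Multiset.count_cons_self, Multiset.count_singleton]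
          simp
        omega
      refine ⟨?_, hwdB⟩
      rw [← Multiset.count_pos, Multiset.count_erase_self]
      omega
    have hsur : ∀ D D₁, D ∈ F → D₁ ∈ F → Multiset.Rel (WithinDist K 2) D D₁ →
        Multiset.Rel (WithinDist B 2) ((D.map ψ).erase y') ((D₁.map ψ).erase y') := by
      intro D D₁ hD hD₁ hrel
      obtain ⟨P, hP1, hP2, hP3⟩ := pairs_of_rel hrel
      obtain ⟨gD, hgD, hTgD⟩ := htail D hD
      rw [← hP1] at hgD
      obtain ⟨α, hαP, hα1⟩ := Multiset.mem_map.mp hgD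
      have hTα : Tl α.1 := hα1 ▸ hTgD
      obtain ⟨gE, hgE, hTgE⟩ := htail D₁ hD₁
      rw [← hP2] at hgE
      obtain ⟨β, hβP, hβ2⟩ := Multiset.mem_map.mp hgE
      have hTβ : Tl β.2 := hβ2 ▸ hTgE
      by_cases habeq : α = β
      · subst habeq
        have hPP : P = α ::ₘ P.erase α := (Multiset.cons_erase hαP).symm
        have eD' : (D.map ψ).erase y' = (P.erase α).map (fun p => ψ p.1) := by
          rw [← hP1, Multiset.map_map]
          conv_lhs => rw [hPP]
          rw [Multiset.map_cons]
          show (ψ (α.1) ::ₘ _).erase y' = _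
          rw [hψT _ hTα, Multiset.erase_cons_head]
          rfl
        have eE' : (D₁.map ψ).erase y' = (P.erase α).map (fun p => ψ p.2) := by
          rw [← hP2, Multiset.map_map]
          conv_lhs => rw [hPP]
          rw [Multiset.map_cons]
          show (ψ (α.2) ::ₘ _).erase y' = _
          rw [hψT _ hTβ, Multiset.erase_cons_head]
          rfl
        rw [eD', eE']
        exact rel_of_pairs _ _ _
          (fun p hp => withinDist_map ψ ψlip (hP3 p (Multiset.mem_of_mem_erase hp)))
      · have hβP' : β ∈ P.erase α := (Multiset.mem_erase_of_ne (Ne.symm habeq)).mpr hβP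
        have hPP : P = α ::ₘ β ::ₘ (P.erase α).erase β := by
          rw [Multiset.cons_erase hβP', Multiset.cons_erase hαP]
        have eD' : (D.map ψ).erase y' =
            ψ β.1 ::ₘ ((P.erase α).erase β).map (fun p => ψ p.1) := by
          rw [← hP1, Multiset.map_map]
          conv_lhs => rw [hPP]
          rw [Multiset.map_cons, Multiset.map_cons]
          show (ψ (α.1) ::ₘ _ ::ₘ _).erase y' = _
          rw [hψT _ hTα, Multiset.erase_cons_head]
          rfl
        have eE' : (D₁.map ψ).erase y' =
            ψ α.2 ::ₘ ((P.erase α).erase β).map (fun p => ψ p.2) := by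
          rw [← hP2, Multiset.map_map]
          conv_lhs => rw [hPP]
          rw [Multiset.map_cons, Multiset.map_cons]
          show (ψ (α.2) ::ₘ ψ (β.2) ::ₘ _).erase y' = _
          rw [hψT _ hTβ, Multiset.cons_swap, Multiset.erase_cons_head]
          rfl
        rw [eD', eE']
        refine Multiset.Rel.cons ?_ (rel_of_pairs _ _ _
          (fun p hp => withinDist_map ψ ψlip
            (hP3 p (Multiset.mem_of_mem_erase (Multiset.mem_of_mem_erase hp)))))
        have c1 : ψ β.1 = y' ∨ B.Adj y' (ψ β.1) := by
          by_cases hT : Tl β.1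
          · exact Or.inl (hψT _ hT)
          · rcases F3 β.1 β.2 (hP3 β hβP) hTβ with h | h
            · exact absurd h hT
            · rcases h with h | h
              · exact Or.inl (by rw [h, hψy])
              · obtain ⟨u, hu⟩ := hnTl_r β.1 hT
                refine Or.inr ?_
                rw [← hu, hψι]
                exact (hadj y' u).mpr (by rw [hy', hu]; exact h)
        have c2 : ψ α.2 = y' ∨ B.Adj y' (ψ α.2) := by
          by_cases hT : Tl α.2
          · exact Or.inl (hψT _ hT)
          · have hab2 : α.1 = a ∨ α.1 = b := by
              rcases hTα with h | h | h
              · exact Or.inl h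
              · exact Or.inr h
              · exfalso
                exact hT (F1 α.2 (withinDist_symm (h ▸ hP3 α hαP)))
            rcases F2 α.1 α.2 (hP3 α hαP) hab2 hT with h | h
            · exact Or.inl (by rw [h, hψy])
            · obtain ⟨u, hu⟩ := hnTl_r α.2 hT
              refine Or.inr ?_
              rw [← hu, hψι]
              exact (hadj y' u).mpr (by rw [hy', hu]; exact h)
        exact wd_ball c1 c2
    have hm1 : 1 ≤ m := by
      obtain ⟨g, hg, _⟩ := htail D₀ hD₀
      have h1 : 0 < Multiset.card D₀ := Multiset.card_pos_iff_exists_mem.mpr ⟨g, hg⟩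
      rw [(hprop D₀ hD₀).1] at h1
      omega
    refine ⟨hm1, ⟨⟨(D₀.map ψ).erase y', ⟨D₀, hD₀, rfl⟩⟩, ?_, ?_⟩⟩
    · rintro E ⟨D, hD, rfl⟩
      constructor
      · rw [Multiset.card_erase_of_mem (hyin D hD), Multiset.card_map, (hprop D hD).1]
        rfl
      · intro v
        by_cases hb : ∃ g ∈ D, (∃ u, ι u = g) ∧ WithinDist K 2 g (ι v)
        · obtain ⟨g, hg, ⟨u, rfl⟩, hwd⟩ := hb
          refine ⟨u, hmem D hD u hg, ?_⟩
          have h := withinDist_map ψ ψlip hwd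
          rwa [hψι u, hψι v] at h
        · obtain ⟨h1, h2⟩ := hkey D hD v hb
          exact ⟨y', h1, h2⟩
    · rintro E ⟨D, hD, rfl⟩ v
      obtain ⟨D₁, hD₁, hvin, hrel⟩ := htrans D hD (ι v)
      exact ⟨(D₁.map ψ).erase y', ⟨D₁, hD₁, rfl⟩, hmem D₁ hD₁ v hvin,
        hsur D D₁ hD hD₁ hrel⟩
  -- conclude
  have hSne : Nonempty S := ⟨a⟩
  have hV'ne : Nonempty V' := ⟨y'⟩
  have hKne : {m | ∃ F, IsEternalFamily K 2 m F}.Nonempty := by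
    obtain ⟨m, F, h⟩ := exists_eternalFamily K 2
    exact ⟨m, F, h⟩
  have hBne : {m | ∃ F, IsEternalFamily B 2 m F}.Nonempty := by
    obtain ⟨m, F, h⟩ := exists_eternalFamily B 2
    exact ⟨m, F, h⟩
  obtain ⟨FK, hFK⟩ := Nat.sInf_mem hKne
  obtain ⟨hm1, hlow⟩ := lower _ _ hFK
  have h1 : eternalNum B 2 ≤ eternalNum K 2 - 1 := Nat.sInf_le ⟨_, hlow⟩
  obtain ⟨FB, hFB⟩ := Nat.sInf_mem hBne
  have h2 : eternalNum K 2 ≤ eternalNum B 2 + 1 := Nat.sInf_le ⟨_, upper _ _ hFB⟩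
  have h3 : 1 ≤ eternalNum K 2 := hm1
  omega

lemma leaf_removal_connected {G : SimpleGraph V} (hconn : G.Connected) {x y₀ : V}
    (hxy : G.Adj x y₀) (huniq : ∀ z, G.Adj z x → z = y₀) :
    (G.induce {w | w ≠ x}).Connected := by
  have key : ∀ n (u v : V) (hu : u ≠ x) (hv : v ≠ x) (w : G.Walk u v), w.length ≤ n →
      (G.induce {w | w ≠ x}).Reachable ⟨u, hu⟩ ⟨v, hv⟩ := by
    intro n
    induction n with
    | zero =>
      intro u v hu hv w hw
      cases w with
      | nil => exact Reachable.refl _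
      | cons hadj rest => simp [Walk.length_cons] at hw
    | succ n ih =>
      intro u v hu hv w hw
      cases w with
      | nil => exact Reachable.refl _
      | @cons _ z _ hadj rest =>
        by_cases hz : z = x
        · subst hz
          have hu_y : u = y₀ := huniq u hadj
          cases rest with
          | nil => exact absurd rfl hv
          | @cons _ z₂ _ hadj₂ rest₂ =>
            have hz₂ : z₂ = y₀ := huniq z₂ hadj₂.symm
            refine ih u v hu hv (rest₂.copy (hz₂.trans hu_y.symm) rfl) ?_
            rw [Walk.length_copy]
            simp only [Walk.length_cons] at hw
            omega
        · have hstep : (G.induce {w | w ≠ x}).Adj ⟨u, hu⟩ ⟨z, hz⟩ := by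
            simpa using hadj
          refine (hstep.reachable).trans (ih z v hz hv rest ?_)
          simp only [Walk.length_cons] at hw
          omega
  rw [connected_iff]
  refine ⟨fun p q => ?_, ⟨⟨y₀, hxy.ne'⟩⟩⟩
  obtain ⟨w⟩ := hconn p.1 q.1
  exact key w.length p.1 q.1 p.2 q.2 w le_rfl

lemma ap_inl_inl {G : SimpleGraph V} {x : V} {u w : V} :
    (attachPath G x 3).Adj (Sum.inl u) (Sum.inl w) ↔ G.Adj u w := by
  simp [attachPath, SimpleGraph.map_adj', SimpleGraph.fromEdgeSet_adj, Sym2.eq_iff]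
  exact fun h => h.ne

lemma ap_inr_inr {G : SimpleGraph V} {x : V} {i j : Fin 3} :
    (attachPath G x 3).Adj (Sum.inr i) (Sum.inr j) ↔ (pathGraph 3).Adj i j := by
  simp [attachPath, SimpleGraph.map_adj', SimpleGraph.fromEdgeSet_adj, Sym2.eq_iff]
  exact fun h => h.ne

lemma ap_inl_inr {G : SimpleGraph V} {x : V} {u : V} {i : Fin 3} :
    (attachPath G x 3).Adj (Sum.inl u) (Sum.inr i) ↔ (u = x ∧ i = 0) := by
  simp [attachPath, SimpleGraph.map_adj', SimpleGraph.fromEdgeSet_adj, Sym2.eq_iff]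

lemma fin3 (i : Fin 3) : i = 0 ∨ i = 1 ∨ i = 2 := by fin_cases i <;> simp

-- characterize all neighbors in attachPath

lemma ap_nbr_c {G : SimpleGraph V} {x : V} {z : V ⊕ Fin 3}
    (h : (attachPath G x 3).Adj z (Sum.inr 2)) : z = Sum.inr 1 := by
  match z with
  | Sum.inl w =>
      rw [ap_inl_inr] at h
      exact absurd h.2 (by decide)
  | Sum.inr j =>
      rw [ap_inr_inr, pathGraph_adj] at h
      have h2 : j = 1 := by
        rcases h with h | h
        · exact Fin.ext (by omega)
        · exact absurd h (by omega)
      rw [h2]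

lemma ap_nbr_b {G : SimpleGraph V} {x : V} {z : V ⊕ Fin 3}
    (h : (attachPath G x 3).Adj z (Sum.inr 1)) : z = Sum.inr 0 ∨ z = Sum.inr 2 := by
  match z with
  | Sum.inl w =>
      rw [ap_inl_inr] at h
      exact absurd h.2 (by decide)
  | Sum.inr j =>
      rw [ap_inr_inr, pathGraph_adj] at h
      rcases h with h | h
      · exact Or.inl (by rw [show j = 0 from Fin.ext (by omega)])
      · exact Or.inr (by rw [show j = 2 from Fin.ext (by omega)])

lemma ap_nbr_a {G : SimpleGraph V} {x : V} {z : V ⊕ Fin 3}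
    (h : (attachPath G x 3).Adj z (Sum.inr 0)) : z = Sum.inl x ∨ z = Sum.inr 1 := by
  match z with
  | Sum.inl w =>
      rw [ap_inl_inr] at h
      exact Or.inl (by rw [h.1])
  | Sum.inr j =>
      rw [ap_inr_inr, pathGraph_adj] at h
      rcases h with h | h
      · exact absurd h (by omega)
      · exact Or.inr (by rw [show j = 1 from Fin.ext (by omega)])

lemma ap_nbr_x {G : SimpleGraph V} {x y₀ : V} (huniq : ∀ z, G.Adj z x → z = y₀)
    {z : V ⊕ Fin 3} (h : (attachPath G x 3).Adj z (Sum.inl x)) :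
    z = Sum.inl y₀ ∨ z = Sum.inr 0 := by
  match z with
  | Sum.inl w =>
      rw [ap_inl_inl] at h
      exact Or.inl (by rw [huniq w h])
  | Sum.inr j =>
      have h2 := (ap_inl_inr (G := G)).mp h.symm
      exact Or.inr (by rw [h2.2])

lemma ap_x_a {G : SimpleGraph V} {x : V} : (attachPath G x 3).Adj (Sum.inl x) (Sum.inr 0) :=
  ap_inl_inr.mpr ⟨rfl, rfl⟩

lemma ap_a_b {G : SimpleGraph V} {x : V} : (attachPath G x 3).Adj (Sum.inr 0) (Sum.inr 1) := by
  rw [ap_inr_inr, pathGraph_adj]; left; rfl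

lemma ap_b_c {G : SimpleGraph V} {x : V} : (attachPath G x 3).Adj (Sum.inr 1) (Sum.inr 2) := by
  rw [ap_inr_inr, pathGraph_adj]; left; rfl

lemma e1 [Fintype V] (G : SimpleGraph V) (x : V) :
    eternalNum (attachPath G x 3) 2 = eternalNum G 2 + 1 := by
  classical
  apply pend (attachPath G x 3) G (Sum.inr 0) (Sum.inr 1) (Sum.inr 2) (Sum.inl x) Sum.inl
    Sum.inl_injective
  · intro u v
    exact ap_inl_inl.symm
  · intro z
    match z with
    | Sum.inl w =>
        constructor
        · intro _; exact ⟨w, rfl⟩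
        · intro _; refine ⟨by simp, by simp, by simp⟩
    | Sum.inr i =>
        constructor
        · rintro ⟨h0, h1, h2⟩
          rcases fin3 i with rfl | rfl | rfl
          · exact absurd rfl h0
          · exact absurd rfl h1
          · exact absurd rfl h2
        · rintro ⟨p, hp⟩
          simp at hp
  · exact ⟨x, rfl⟩
  · exact ap_x_a
  · exact ap_a_b
  · exact ap_b_c
  · intro z h; exact ap_nbr_a h
  · intro z h; exact ap_nbr_b h
  · intro z h; exact ap_nbr_c h

lemma e2 [Fintype V] (G : SimpleGraph V) (x u : V) (hux : u ≠ x) :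
    eternalNum ((attachPath G x 3).induce {w | w ≠ Sum.inl u}) 2
      = eternalNum (G.induce {w | w ≠ u}) 2 + 1 := by
  classical
  haveI : Fintype ↥{w : V ⊕ Fin 3 | w ≠ Sum.inl u} := Fintype.ofFinite _
  haveI : Fintype ↥{w : V | w ≠ u} := Fintype.ofFinite _
  have hxne : (Sum.inl x : V ⊕ Fin 3) ≠ Sum.inl u := fun h => hux (Sum.inl.inj h).symm
  apply pend ((attachPath G x 3).induce {w | w ≠ Sum.inl u}) (G.induce {w | w ≠ u})
      ⟨Sum.inr 0, by simp⟩ ⟨Sum.inr 1, by simp⟩ ⟨Sum.inr 2, by simp⟩ ⟨Sum.inl x, hxne⟩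
      (fun p => ⟨Sum.inl p.1, fun h => p.2 (Sum.inl.inj h)⟩)
  · intro p q h
    exact Subtype.ext (Sum.inl.inj (congrArg Subtype.val h))
  · intro p q
    show G.Adj p.1 q.1 ↔ (attachPath G x 3).Adj (Sum.inl p.1) (Sum.inl q.1)
    exact ap_inl_inl.symm
  · intro z
    obtain ⟨zv, hz⟩ := z
    match zv with
    | Sum.inl w =>
        have hwu : w ≠ u := fun h => hz (by rw [h])
        constructor
        · intro _
          exact ⟨⟨w, hwu⟩, Subtype.ext rfl⟩
        · intro _
          refine ⟨?_, ?_, ?_⟩ <;> · intro h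
                                    have := congrArg Subtype.val h
                                    simp at this
    | Sum.inr i =>
        constructor
        · rintro ⟨h0, h1, h2⟩
          rcases fin3 i with rfl | rfl | rfl
          · exact absurd (Subtype.ext rfl) h0
          · exact absurd (Subtype.ext rfl) h1
          · exact absurd (Subtype.ext rfl) h2
        · rintro ⟨p, hp⟩
          have := congrArg Subtype.val hp
          simp at this
  · exact ⟨⟨x, Ne.symm hux⟩, Subtype.ext rfl⟩
  · show (attachPath G x 3).Adj (Sum.inl x) (Sum.inr 0)
    exact ap_x_a
  · show (attachPath G x 3).Adj (Sum.inr 0) (Sum.inr 1)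
    exact ap_a_b
  · show (attachPath G x 3).Adj (Sum.inr 1) (Sum.inr 2)
    exact ap_b_c
  · intro z h
    obtain ⟨zv, hz⟩ := z
    have h2 : (attachPath G x 3).Adj zv (Sum.inr 0) := h
    rcases ap_nbr_a h2 with h' | h'
    · exact Or.inl (Subtype.ext h')
    · exact Or.inr (Subtype.ext h')
  · intro z h
    obtain ⟨zv, hz⟩ := z
    have h2 : (attachPath G x 3).Adj zv (Sum.inr 1) := h
    rcases ap_nbr_b h2 with h' | h'
    · exact Or.inl (Subtype.ext h')
    · exact Or.inr (Subtype.ext h')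
  · intro z h
    obtain ⟨zv, hz⟩ := z
    have h2 : (attachPath G x 3).Adj zv (Sum.inr 2) := h
    exact Subtype.ext (ap_nbr_c h2)

lemma e3 [Fintype V] (G : SimpleGraph V) (x y₀ : V) (hxy : G.Adj x y₀)
    (huniq : ∀ z, G.Adj z x → z = y₀) :
    eternalNum ((attachPath G x 3).induce {w | w ≠ Sum.inr 2}) 2
      = eternalNum (G.induce {w | w ≠ x}) 2 + 1 := by
  classical
  haveI : Fintype ↥{w : V ⊕ Fin 3 | w ≠ Sum.inr 2} := Fintype.ofFinite _
  haveI : Fintype ↥{w : V | w ≠ x} := Fintype.ofFinite _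
  apply pend ((attachPath G x 3).induce {w | w ≠ Sum.inr 2}) (G.induce {w | w ≠ x})
      ⟨Sum.inl x, by simp⟩ ⟨Sum.inr 0, by simp⟩ ⟨Sum.inr 1, by simp⟩ ⟨Sum.inl y₀, by simp⟩
      (fun p => ⟨Sum.inl p.1, by simp⟩)
  · intro p q h
    exact Subtype.ext (Sum.inl.inj (congrArg Subtype.val h))
  · intro p q
    show G.Adj p.1 q.1 ↔ (attachPath G x 3).Adj (Sum.inl p.1) (Sum.inl q.1)
    exact ap_inl_inl.symm
  · intro z
    obtain ⟨zv, hz⟩ := z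
    match zv with
    | Sum.inl w =>
        constructor
        · rintro ⟨h0, _, _⟩
          have hwx : w ≠ x := fun h => h0 (by subst h; rfl)
          exact ⟨⟨w, hwx⟩, Subtype.ext rfl⟩
        · rintro ⟨p, hp⟩
          have hpv : Sum.inl p.1 = Sum.inl w := congrArg Subtype.val hp
          have hpw : p.1 = w := Sum.inl.inj hpv
          refine ⟨?_, ?_, ?_⟩
          · intro h
            exact p.2 (by rw [hpw]; exact Sum.inl.inj (congrArg Subtype.val h))
          · intro h
            have := congrArg Subtype.val h
            simp at this
          · intro h
            have := congrArg Subtype.val h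
            simp at this
    | Sum.inr i =>
        have hi : i ≠ 2 := fun h => hz (by rw [h])
        constructor
        · rintro ⟨h0, h1, h2⟩
          rcases fin3 i with rfl | rfl | rfl
          · exact absurd (Subtype.ext rfl) h1
          · exact absurd (Subtype.ext rfl) h2
          · exact absurd rfl hi
        · rintro ⟨p, hp⟩
          have := congrArg Subtype.val hp
          simp at this
  · exact ⟨⟨y₀, hxy.ne'⟩, Subtype.ext rfl⟩
  · show (attachPath G x 3).Adj (Sum.inl y₀) (Sum.inl x)
    exact ap_inl_inl.mpr hxy.symm
  · show (attachPath G x 3).Adj (Sum.inl x) (Sum.inr 0)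
    exact ap_x_a
  · show (attachPath G x 3).Adj (Sum.inr 0) (Sum.inr 1)
    exact ap_a_b
  · intro z h
    obtain ⟨zv, hz⟩ := z
    have h2 : (attachPath G x 3).Adj zv (Sum.inl x) := h
    rcases ap_nbr_x huniq h2 with h' | h'
    · exact Or.inl (Subtype.ext h')
    · exact Or.inr (Subtype.ext h')
  · intro z h
    obtain ⟨zv, hz⟩ := z
    have h2 : (attachPath G x 3).Adj zv (Sum.inr 0) := h
    rcases ap_nbr_a h2 with h' | h'
    · exact Or.inl (Subtype.ext h')
    · exact Or.inr (Subtype.ext h')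
  · intro z h
    obtain ⟨zv, hz⟩ := z
    have h2 : (attachPath G x 3).Adj zv (Sum.inr 1) := h
    rcases ap_nbr_b h2 with h' | h'
    · exact Subtype.ext h'
    · exact absurd (by rw [h'] : zv = Sum.inr 2) (fun hh => hz (by rw [hh]))

lemma c2 (G : SimpleGraph V) (x u : V) (hux : u ≠ x)
    (hconn : (G.induce {w | w ≠ u}).Connected) :
    ((attachPath G x 3).induce {w | w ≠ Sum.inl u}).Connected := by
  have hxne : (Sum.inl x : V ⊕ Fin 3) ≠ Sum.inl u := fun h => hux (Sum.inl.inj h).symm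
  set K := (attachPath G x 3).induce {w | w ≠ Sum.inl u} with hK
  have flip : ∀ ⦃p q : ↥{w : V | w ≠ u}⦄, (G.induce {w | w ≠ u}).Adj p q →
      K.Adj ⟨Sum.inl p.1, fun h => p.2 (Sum.inl.inj h)⟩ ⟨Sum.inl q.1, fun h => q.2 (Sum.inl.inj h)⟩
      ∨ (⟨Sum.inl p.1, fun h => p.2 (Sum.inl.inj h)⟩ : ↥{w : V ⊕ Fin 3 | w ≠ Sum.inl u})
        = (⟨Sum.inl q.1, fun h => q.2 (Sum.inl.inj h)⟩ : ↥{w : V ⊕ Fin 3 | w ≠ Sum.inl u}) := by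
    intro p q h
    left
    show (attachPath G x 3).Adj (Sum.inl p.1) (Sum.inl q.1)
    exact ap_inl_inl.mpr h
  have hroot : ∀ z : ↥{w : V ⊕ Fin 3 | w ≠ Sum.inl u}, K.Reachable z ⟨Sum.inl x, hxne⟩ := by
    intro z
    obtain ⟨zv, hz⟩ := z
    match zv with
    | Sum.inl w =>
        have hwu : w ≠ u := fun h => hz (by rw [h])
        have hr := hconn.preconnected ⟨w, hwu⟩ ⟨x, Ne.symm hux⟩
        have := reachable_lip (G := G.induce {w | w ≠ u}) (G' := K)
          (fun p => ⟨Sum.inl p.1, fun h => p.2 (Sum.inl.inj h)⟩) flip hr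
        exact this
    | Sum.inr i =>
        have e0 : K.Adj ⟨Sum.inr 0, by simp⟩ ⟨Sum.inl x, hxne⟩ := by
          show (attachPath G x 3).Adj (Sum.inr 0) (Sum.inl x)
          exact ap_x_a.symm
        have e1 : K.Adj ⟨Sum.inr 1, by simp⟩ ⟨Sum.inr 0, by simp⟩ := by
          show (attachPath G x 3).Adj (Sum.inr 1) (Sum.inr 0)
          exact ap_a_b.symm
        have e2 : K.Adj ⟨Sum.inr 2, by simp⟩ ⟨Sum.inr 1, by simp⟩ := by
          show (attachPath G x 3).Adj (Sum.inr 2) (Sum.inr 1)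
          exact ap_b_c.symm
        rcases fin3 i with rfl | rfl | rfl
        · exact e0.reachable
        · exact (e1.reachable).trans e0.reachable
        · exact (e2.reachable).trans ((e1.reachable).trans e0.reachable)
  rw [connected_iff]
  exact ⟨fun p q => (hroot p).trans (hroot q).symm, ⟨⟨Sum.inl x, hxne⟩⟩⟩

lemma c3 (G : SimpleGraph V) (x : V) (hconn : G.Connected) :
    ((attachPath G x 3).induce {w | w ≠ Sum.inr 2}).Connected := by
  set K := (attachPath G x 3).induce {w | w ≠ Sum.inr 2} with hK
  have flip : ∀ ⦃p q : V⦄, G.Adj p q →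
      K.Adj ⟨Sum.inl p, by simp⟩ ⟨Sum.inl q, by simp⟩
      ∨ (⟨Sum.inl p, by simp⟩ : ↥{w : V ⊕ Fin 3 | w ≠ Sum.inr 2}) = ⟨Sum.inl q, by simp⟩ := by
    intro p q h
    left
    show (attachPath G x 3).Adj (Sum.inl p) (Sum.inl q)
    exact ap_inl_inl.mpr h
  have hroot : ∀ z : ↥{w : V ⊕ Fin 3 | w ≠ Sum.inr 2}, K.Reachable z ⟨Sum.inl x, by simp⟩ := by
    intro z
    obtain ⟨zv, hz⟩ := z
    match zv with
    | Sum.inl w =>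
        exact reachable_lip (G := G) (G' := K) (fun p => ⟨Sum.inl p, by simp⟩) flip
          (hconn.preconnected w x)
    | Sum.inr i =>
        have hi : i ≠ 2 := fun h => hz (by rw [h])
        have e0 : K.Adj ⟨Sum.inr 0, by simp⟩ ⟨Sum.inl x, by simp⟩ := by
          show (attachPath G x 3).Adj (Sum.inr 0) (Sum.inl x)
          exact ap_x_a.symm
        have e1 : K.Adj ⟨Sum.inr 1, by simp⟩ ⟨Sum.inr 0, by simp⟩ := by
          show (attachPath G x 3).Adj (Sum.inr 1) (Sum.inr 0)
          exact ap_a_b.symm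
        rcases fin3 i with rfl | rfl | rfl
        · exact e0.reachable
        · exact (e1.reachable).trans e0.reachable
        · exact absurd rfl hi
  rw [connected_iff]
  exact ⟨fun p q => (hroot p).trans (hroot q).symm, ⟨⟨Sum.inl x, by simp⟩⟩⟩

lemma c4 (G : SimpleGraph V) (x u : V) (hux : u ≠ x)
    (hconn : ((attachPath G x 3).induce {w | w ≠ Sum.inl u}).Connected) :
    (G.induce {w | w ≠ u}).Connected := by
  classical
  set K := (attachPath G x 3).induce {w | w ≠ Sum.inl u} with hK
  set f : ↥{w : V ⊕ Fin 3 | w ≠ Sum.inl u} → ↥{w : V | w ≠ u} := fun z =>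
    if h : ∃ w : V, z.1 = Sum.inl w then
      ⟨h.choose, fun hc => z.2 (by rw [h.choose_spec, hc])⟩
    else ⟨x, Ne.symm hux⟩ with hf
  have hfval : ∀ (w : V) (hw : Sum.inl w ∈ {w : V ⊕ Fin 3 | w ≠ Sum.inl u}),
      f ⟨Sum.inl w, hw⟩ = ⟨w, fun hc => hw (by rw [hc])⟩ := by
    intro w hw
    have h : ∃ w' : V, (⟨Sum.inl w, hw⟩ : ↥{w : V ⊕ Fin 3 | w ≠ Sum.inl u}).1 = Sum.inl w' :=
      ⟨w, rfl⟩
    simp only [hf, dif_pos h]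
    exact Subtype.ext (Sum.inl.inj h.choose_spec.symm)
  have flip : ∀ ⦃p q : ↥{w : V ⊕ Fin 3 | w ≠ Sum.inl u}⦄, K.Adj p q →
      (G.induce {w | w ≠ u}).Adj (f p) (f q) ∨ f p = f q := by
    intro p q h
    obtain ⟨pv, hp⟩ := p
    obtain ⟨qv, hq⟩ := q
    have h2 : (attachPath G x 3).Adj pv qv := h
    match pv, qv with
    | Sum.inl w, Sum.inl w' =>
        left
        rw [hfval w hp, hfval w' hq]
        show G.Adj w w'
        exact ap_inl_inl.mp h2
    | Sum.inl w, Sum.inr i =>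
        right
        have hwx : w = x := ((ap_inl_inr).mp h2).1
        rw [hfval w hp]
        have : f ⟨Sum.inr i, hq⟩ = ⟨x, Ne.symm hux⟩ := by
          simp only [hf, dif_neg (show ¬ ∃ w' : V, (Sum.inr i : V ⊕ Fin 3) = Sum.inl w' by
            rintro ⟨w', hw'⟩; simp at hw')]
        rw [this]
        exact Subtype.ext hwx
    | Sum.inr i, Sum.inl w =>
        right
        have hwx : w = x := ((ap_inl_inr).mp h2.symm).1
        rw [hfval w hq]
        have : f ⟨Sum.inr i, hp⟩ = ⟨x, Ne.symm hux⟩ := by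
          simp only [hf, dif_neg (show ¬ ∃ w' : V, (Sum.inr i : V ⊕ Fin 3) = Sum.inl w' by
            rintro ⟨w', hw'⟩; simp at hw')]
        rw [this]
        exact (Subtype.ext hwx).symm
    | Sum.inr i, Sum.inr j =>
        right
        simp only [hf]
        rw [dif_neg (show ¬ ∃ w' : V, (Sum.inr i : V ⊕ Fin 3) = Sum.inl w' by
            rintro ⟨w', hw'⟩; simp at hw'),
          dif_neg (show ¬ ∃ w' : V, (Sum.inr j : V ⊕ Fin 3) = Sum.inl w' by
            rintro ⟨w', hw'⟩; simp at hw')]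
  rw [connected_iff]
  refine ⟨fun p q => ?_, ⟨⟨x, Ne.symm hux⟩⟩⟩
  have hp : (Sum.inl p.1 : V ⊕ Fin 3) ≠ Sum.inl u := fun h => p.2 (Sum.inl.inj h)
  have hq : (Sum.inl q.1 : V ⊕ Fin 3) ≠ Sum.inl u := fun h => q.2 (Sum.inl.inj h)
  have hr := hconn.preconnected ⟨Sum.inl p.1, hp⟩ ⟨Sum.inl q.1, hq⟩
  have := reachable_lip f flip hr
  rw [hfval p.1 hp, hfval q.1 hq] at this
  exact this

lemma c5a (G : SimpleGraph V) (x y₀ : V) (hxy : G.Adj x y₀) :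
    ¬ ((attachPath G x 3).induce {w | w ≠ Sum.inl x}).Connected := by
  intro h
  have hr := h.preconnected ⟨Sum.inl y₀, fun hh => hxy.ne' (Sum.inl.inj hh)⟩ ⟨Sum.inr 0, by simp⟩
  refine no_reach (fun z => z.1.isLeft) ?_ (by simp) hr
  intro p q hadj
  obtain ⟨pv, hp⟩ := p
  obtain ⟨qv, hq⟩ := q
  have h2 : (attachPath G x 3).Adj pv qv := hadj
  match pv, qv with
  | Sum.inl w, Sum.inl w' => rfl
  | Sum.inl w, Sum.inr i =>
      exact absurd (((ap_inl_inr).mp h2).1) (fun hh => hp (by rw [hh]))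
  | Sum.inr i, Sum.inl w =>
      exact absurd (((ap_inl_inr).mp h2.symm).1) (fun hh => hq (by rw [hh]))
  | Sum.inr i, Sum.inr j => rfl

lemma c5b (G : SimpleGraph V) (x : V) :
    ¬ ((attachPath G x 3).induce {w | w ≠ Sum.inr 0}).Connected := by
  intro h
  have hr := h.preconnected ⟨Sum.inl x, by simp⟩ ⟨Sum.inr 2, by simp⟩
  refine no_reach (fun z => z.1.isLeft) ?_ (by simp) hr
  intro p q hadj
  obtain ⟨pv, hp⟩ := p
  obtain ⟨qv, hq⟩ := q
  have h2 : (attachPath G x 3).Adj pv qv := hadj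
  match pv, qv with
  | Sum.inl w, Sum.inl w' => rfl
  | Sum.inl w, Sum.inr i =>
      exact absurd (((ap_inl_inr).mp h2).2) (fun hh => hq (by rw [hh]))
  | Sum.inr i, Sum.inl w =>
      exact absurd (((ap_inl_inr).mp h2.symm).2) (fun hh => hp (by rw [hh]))
  | Sum.inr i, Sum.inr j => rfl

lemma c5c (G : SimpleGraph V) (x : V) :
    ¬ ((attachPath G x 3).induce {w | w ≠ Sum.inr 1}).Connected := by
  intro h
  have hr := h.preconnected ⟨Sum.inl x, by simp⟩ ⟨Sum.inr 2, by simp⟩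
  refine no_reach (fun z => Sum.elim (fun _ => true) (fun i => decide (i = 0)) z.1) ?_
    (by simp) hr
  intro p q hadj
  obtain ⟨pv, hp⟩ := p
  obtain ⟨qv, hq⟩ := q
  have h2 : (attachPath G x 3).Adj pv qv := hadj
  match pv, qv with
  | Sum.inl w, Sum.inl w' => rfl
  | Sum.inl w, Sum.inr i =>
      have : i = 0 := ((ap_inl_inr).mp h2).2
      subst this
      rfl
  | Sum.inr i, Sum.inl w =>
      have : i = 0 := ((ap_inl_inr).mp h2.symm).2
      subst this
      rfl
  | Sum.inr i, Sum.inr j =>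
      have hi : i ≠ 1 := fun hh => hp (by rw [hh])
      have hj : j ≠ 1 := fun hh => hq (by rw [hh])
      have hij := (ap_inr_inr (x := x)).mp h2
      rw [pathGraph_adj] at hij
      exfalso
      rcases fin3 i with rfl | rfl | rfl <;> rcases fin3 j with rfl | rfl | rfl <;>
        simp_all

/-- appending a path on three vertices to a leaf preserves (in both
directions) eternal distance-2 domination criticality. -/
theorem critical_extension_P3 {V : Type u} [Fintype V] (G : SimpleGraph V) (hG : G.IsTree)
    (x : V) (hx : IsLeafV G x) :
    EternalCritical (attachPath G x 3) ↔ EternalCritical G := by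
  classical
  obtain ⟨y₀, hxy₀, huniq'⟩ := hx
  have huniq : ∀ z, G.Adj z x → z = y₀ := fun z h => huniq' z h.symm
  constructor
  · intro hcrit u hu
    by_cases hux : u = x
    · subst hux
      have hlt := hcrit (Sum.inr 2) (c3 G u hG.isConnected)
      rw [e3 G u y₀ hxy₀ huniq, e1 G u] at hlt
      omega
    · have hlt := hcrit (Sum.inl u) (c2 G x u hux hu)
      rw [e2 G x u hux, e1 G x] at hlt
      omega
  · intro hcrit v hv
    cases v with
    | inl u =>
        by_cases hux : u = x
        · subst hux
          exact absurd hv (c5a G u y₀ hxy₀)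
        · have hlt := hcrit u (c4 G x u hux hv)
          rw [e2 G x u hux, e1 G x]
          omega
    | inr i =>
        rcases fin3 i with rfl | rfl | rfl
        · exact absurd hv (c5b G x)
        · exact absurd hv (c5c G x)
        · have hGx := leaf_removal_connected hG.isConnected hxy₀ huniq
          have hlt := hcrit x hGx
          rw [e3 G x y₀ hxy₀ huniq, e1 G x]
          omega


end EternalDom
end

section
/- Let k be a positive integer, let G be a connected finite graph, and let H be a connected spanning subgraph of G. Then \u03b3^\u221e_{all,k}(G) \u2264 \u03b3^\u221e_{all,k}(H); in particular, the eternal distance-k domination number of a connected graph is at most that of any of its spanning trees. -/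
open SimpleGraph

universe u v

namespace EternalDom

variable {V : Type u} {W : Type v}

lemma withinDist_mono {G H : SimpleGraph V} (hHG : H ≤ G) {k : ℕ} {x y : V}
    (h : WithinDist H k x y) : WithinDist G k x y := by
  obtain ⟨hr, hd⟩ := h
  refine ⟨hr.mono hHG, ?_⟩
  obtain ⟨p, hp⟩ := hr.exists_walk_length_eq_dist
  calc G.dist x y ≤ (p.mapLe hHG).length := SimpleGraph.dist_le _
    _ = p.length := by simp [SimpleGraph.Walk.mapLe]
    _ ≤ k := hp ▸ hd

lemma eternalNum_mono {V : Type u} [Fintype V] {G H : SimpleGraph V}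
    (hHG : H ≤ G) (hH : H.Connected) (k : ℕ) :
    eternalNum G k ≤ eternalNum H k := by
  have hne : {m | ∃ F : Set (Multiset V), IsEternalFamily H k m F}.Nonempty := by
    have : Nonempty V := hH.nonempty
    refine ⟨Multiset.card (Finset.univ.val : Multiset V),
      {(Finset.univ.val : Multiset V)}, ⟨Finset.univ.val, rfl⟩, ?_, ?_⟩
    · rintro D rfl
      exact ⟨rfl, fun w => ⟨w, by simp, hH w w, by simp [SimpleGraph.dist_self]⟩⟩
    · rintro D rfl w
      exact ⟨Finset.univ.val, rfl, by simp, Multiset.rel_refl_of_refl_on fun x _ =>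
        ⟨hH x x, by simp [SimpleGraph.dist_self]⟩⟩
  have hm := Nat.sInf_mem hne
  obtain ⟨F, hF1, hF2, hF3⟩ := hm
  apply Nat.sInf_le
  refine ⟨F, hF1, fun D hD => ⟨(hF2 D hD).1, fun w => ?_⟩, fun D hD w => ?_⟩
  · obtain ⟨x, hx, hxw⟩ := (hF2 D hD).2 w
    exact ⟨x, hx, withinDist_mono hHG hxw⟩
  · obtain ⟨D', hD', hwD', hrel⟩ := hF3 D hD w
    exact ⟨D', hD', hwD', hrel.mono fun a _ b _ h => withinDist_mono hHG h⟩

/-- the eternal distance-`k` domination number of a connected graph is at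
most that of any connected spanning subgraph; in particular, at most that of any spanning
tree. -/
theorem eternalNum_le_of_spanning {V : Type u} [Fintype V] (G H : SimpleGraph V)
    (hHG : H ≤ G) (hG : G.Connected) (hH : H.Connected) (k : ℕ) (hk : 0 < k) :
    eternalNum G k ≤ eternalNum H k ∧
    (∀ T : SimpleGraph V, T ≤ G → T.IsTree → eternalNum G k ≤ eternalNum T k) := by
  exact ⟨eternalNum_mono hHG hH k,
    fun T hTG hT => eternalNum_mono hTG hT.isConnected k⟩

end EternalDom
end

section
/- Let T' be a finite tree, let m \u2265 2, and let T be the tree formed from the disjoint union of T' and a star K_{1,m} by adding one edge from a leaf of the star to a vertex of T'. Then \u03b3(T) = \u03b3(T') + 1. -/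
open SimpleGraph

universe u v

namespace EternalDom

variable {V : Type u} {W : Type v}

open Sum in
lemma attachStar_adj (G : SimpleGraph V) (y : V) (m : ℕ) (a : Fin (m+1))
    (x z : V ⊕ Fin (m + 1)) :
    (attachStar G y m a).Adj x z ↔
      (∃ u v, G.Adj u v ∧ Sum.inl u = x ∧ Sum.inl v = z) ∨
      (∃ u v, (starGraph m).Adj u v ∧ Sum.inr u = x ∧ Sum.inr v = z) ∨
      (x = Sum.inl y ∧ z = Sum.inr a) ∨ (x = Sum.inr a ∧ z = Sum.inl y) := by
  simp only [attachStar, SimpleGraph.sup_adj, SimpleGraph.map_adj,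
    SimpleGraph.fromEdgeSet_adj, Set.mem_singleton_iff, Sym2.eq, Sym2.rel_iff',
    Prod.mk.injEq, Prod.swap_prod_mk, Function.Embedding.coeFn_mk]
  constructor
  · rintro ((h | h) | ⟨(⟨h1,h2⟩|⟨h1,h2⟩), hne⟩)
    · exact Or.inl ((SimpleGraph.map_adj ⟨Sum.inl, Sum.inl_injective⟩ G x z).1 h)
    · exact Or.inr (Or.inl ((SimpleGraph.map_adj ⟨Sum.inr, Sum.inr_injective⟩ (starGraph m) x z).1 h))
    · exact Or.inr (Or.inr (Or.inl ⟨h1, h2⟩))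
    · exact Or.inr (Or.inr (Or.inr ⟨h1, h2⟩))
  · rintro (h | h | ⟨h1, h2⟩ | ⟨h1, h2⟩)
    · exact Or.inl (Or.inl ((SimpleGraph.map_adj ⟨Sum.inl, Sum.inl_injective⟩ G x z).2 h))
    · exact Or.inl (Or.inr ((SimpleGraph.map_adj ⟨Sum.inr, Sum.inr_injective⟩ (starGraph m) x z).2 h))
    · exact Or.inr ⟨Or.inl ⟨h1, h2⟩, by simp [h1, h2]⟩
    · exact Or.inr ⟨Or.inr ⟨h1, h2⟩, by simp [h1, h2]⟩

/-- attaching a star `K_{1,m}` (`m ≥ 2`) to a tree by an edge from one of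
the star's leaves increases the domination number by exactly one. -/
theorem domNum_attachStar {V : Type u} [Fintype V] (G : SimpleGraph V) (hG : G.IsTree)
    (m : ℕ) (hm : 2 ≤ m) (y : V) (a : Fin (m + 1)) (ha : a ≠ 0) :
    domNum (attachStar G y m a) = domNum G + 1 := by
  classical
  set T := attachStar G y m a with hT
  -- nonemptiness of the optimisation sets
  have hSGne : {n | ∃ D : Set V, IsDomSet G D ∧ D.ncard = n}.Nonempty :=
    ⟨Set.univ.ncard, Set.univ, fun w => ⟨w, trivial, Or.inl rfl⟩, rfl⟩
  have hSTne : {n | ∃ D : Set (V ⊕ Fin (m+1)), IsDomSet T D ∧ D.ncard = n}.Nonempty :=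
    ⟨Set.univ.ncard, Set.univ, fun w => ⟨w, trivial, Or.inl rfl⟩, rfl⟩
  -- a minimum dominating set of G
  obtain ⟨Dmin, hDmin, hDminc⟩ :
      ∃ D : Set V, IsDomSet G D ∧ D.ncard = domNum G := Nat.sInf_mem hSGne
  -- upper bound
  have hub : domNum T ≤ domNum G + 1 := by
    apply Nat.sInf_le
    refine ⟨Sum.inl '' Dmin ∪ {Sum.inr 0}, ?_, ?_⟩
    · rintro (w | i)
      · obtain ⟨x, hx, hd⟩ := hDmin w
        refine ⟨Sum.inl x, Or.inl ⟨x, hx, rfl⟩, ?_⟩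
        rcases hd with h | h
        · exact Or.inl (by rw [h])
        · exact Or.inr ((attachStar_adj G y m a _ _).2 (Or.inl ⟨x, w, h, rfl, rfl⟩))
      · refine ⟨Sum.inr 0, Or.inr rfl, ?_⟩
        by_cases hi : i = 0
        · exact Or.inl (by rw [hi])
        · exact Or.inr ((attachStar_adj G y m a _ _).2
            (Or.inr (Or.inl ⟨0, i, Or.inl ⟨rfl, hi⟩, rfl, rfl⟩)))
    · rw [Set.ncard_union_eq (by simp [Set.disjoint_left]),
        Set.ncard_image_of_injective _ Sum.inl_injective, Set.ncard_singleton, hDminc]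
  -- lower bound
  have hlb : domNum G + 1 ≤ domNum T := by
    apply le_csInf hSTne
    rintro n ⟨D, hD, rfl⟩
    -- pick a star leaf b with b ≠ 0, b ≠ a
    have h1 : ((⟨1, by omega⟩ : Fin (m+1)) : Fin (m+1)) ≠ 0 := by
      intro h; have := congrArg Fin.val h; simp at this
    have h2 : ((⟨2, by omega⟩ : Fin (m+1)) : Fin (m+1)) ≠ 0 := by
      intro h; have := congrArg Fin.val h; simp at this
    obtain ⟨b, hb0, hba⟩ : ∃ b : Fin (m+1), b ≠ 0 ∧ b ≠ a := by
      by_cases hA : a = ⟨1, by omega⟩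
      · refine ⟨⟨2, by omega⟩, h2, ?_⟩
        rw [hA]; intro h
        have := congrArg Fin.val h; simp at this
      · exact ⟨⟨1, by omega⟩, h1, fun h => hA h.symm⟩
    -- some vertex inr c ∈ D with c ≠ a
    obtain ⟨c, hcD, hca⟩ : ∃ c : Fin (m+1), Sum.inr c ∈ D ∧ c ≠ a := by
      obtain ⟨x, hx, hd⟩ := hD (Sum.inr b)
      rcases hd with h | h
      · exact ⟨b, h ▸ hx, hba⟩
      · rcases (attachStar_adj G y m a _ _).1 h with
          ⟨u, v, _, _, hv⟩ | ⟨u, v, huv, hu, hv⟩ | ⟨_, hz⟩ | ⟨hx', hz⟩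
        · exact absurd hv (by simp)
        · have hvb : v = b := Sum.inr_injective hv
          rcases huv with ⟨hu0, _⟩ | ⟨hv0, _⟩
          · refine ⟨0, ?_, fun h => ha h.symm⟩
            rw [← hu, hu0] at hx; exact hx
          · exact absurd (hvb ▸ hv0) hb0
        · exact absurd (Sum.inr_injective hz) hba
        · exact absurd hz (by simp)
    -- the projected dominating set of G
    set D₀ : Set V := Sum.inl ⁻¹' D ∪ {v | Sum.inr a ∈ D ∧ v = y} with hD₀
    have hdom₀ : IsDomSet G D₀ := by
      intro w
      obtain ⟨x, hx, hd⟩ := hD (Sum.inl w)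
      rcases hd with h | h
      · exact ⟨w, Or.inl (by rwa [← h] at hx), Or.inl rfl⟩
      · rcases (attachStar_adj G y m a _ _).1 h with
          ⟨u, v, huv, hu, hv⟩ | ⟨u, v, _, _, hv⟩ | ⟨_, hz⟩ | ⟨hx', hz⟩
        · have : v = w := Sum.inl_injective hv
          exact ⟨u, Or.inl (by rw [Set.mem_preimage, hu]; exact hx), Or.inr (this ▸ huv)⟩
        · exact absurd hv (by simp)
        · exact absurd hz (by simp)
        · have hya : Sum.inr a ∈ D := by rwa [hx'] at hx
          have hwy : w = y := Sum.inl_injective hz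
          exact ⟨y, Or.inr ⟨hya, rfl⟩, Or.inl hwy⟩
    have hle : domNum G ≤ D₀.ncard := Nat.sInf_le ⟨D₀, hdom₀, rfl⟩
    -- counting
    have hpre : (Sum.inl '' (Sum.inl ⁻¹' D) : Set (V ⊕ Fin (m+1))).ncard
        = (Sum.inl ⁻¹' D).ncard := Set.ncard_image_of_injective _ Sum.inl_injective
    have hnotmem : ∀ c' : Fin (m+1),
        (Sum.inr c' : V ⊕ Fin (m+1)) ∉ Sum.inl '' (Sum.inl ⁻¹' D) := by
      intro c'; simp
    have hsub0 : Sum.inl '' (Sum.inl ⁻¹' D) ⊆ D := by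
      rintro x ⟨v, hv, rfl⟩; exact hv
    by_cases hia : Sum.inr a ∈ D
    · have hD₀sub : D₀ ⊆ insert y (Sum.inl ⁻¹' D) := by
        rintro v (hv | ⟨_, rfl⟩)
        · exact Set.mem_insert_of_mem _ hv
        · exact Set.mem_insert _ _
      have hcard₀ : D₀.ncard ≤ (Sum.inl ⁻¹' D).ncard + 1 :=
        le_trans (Set.ncard_le_ncard hD₀sub (Set.toFinite _)) (Set.ncard_insert_le _ _)
      have hE : insert (Sum.inr c) (insert (Sum.inr a) (Sum.inl '' (Sum.inl ⁻¹' D))) ⊆ D := by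
        rintro x (rfl | rfl | hx)
        · exact hcD
        · exact hia
        · exact hsub0 hx
      have hEcard : (insert (Sum.inr c) (insert (Sum.inr a)
          (Sum.inl '' (Sum.inl ⁻¹' D))) : Set (V ⊕ Fin (m+1))).ncard
          = (Sum.inl ⁻¹' D).ncard + 2 := by
        rw [Set.ncard_insert_of_notMem (by simp [hca]),
          Set.ncard_insert_of_notMem (hnotmem a), hpre]
      have := Set.ncard_le_ncard hE (Set.toFinite _)
      omega
    · have hD₀eq : D₀ = Sum.inl ⁻¹' D := by
        apply Set.union_eq_self_of_subset_right
        rintro v ⟨h, _⟩; exact absurd h hia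
      have hE : insert (Sum.inr c) (Sum.inl '' (Sum.inl ⁻¹' D)) ⊆ D := by
        rintro x (rfl | hx)
        · exact hcD
        · exact hsub0 hx
      have hEcard : (insert (Sum.inr c)
          (Sum.inl '' (Sum.inl ⁻¹' D)) : Set (V ⊕ Fin (m+1))).ncard
          = (Sum.inl ⁻¹' D).ncard + 1 := by
        rw [Set.ncard_insert_of_notMem (hnotmem c), hpre]
      have := Set.ncard_le_ncard hE (Set.toFinite _)
      rw [hD₀eq] at hle
      omega
  omega


end EternalDom
end
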